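/- Let G be a finite simple graph, s a vertex of G, and X ⊆ V(G) with |X| = k such that G ∖ X is a threshold graph. Then every optimal strategy for the firefighting process on (G, s) defends at most 2k + 2 vertices. -/

import Mathlib

open SimpleGraph

variable {V : Type*}

/-- The set of vertices burned by the end of time step `i` (0-indexed: `burnt G s S i` is `B_i`),
when a fire starts at `s` and the firefighter defends the vertices of the list `S` in order. -/
def burnt (G : SimpleGraph V) (s : V) (S : List V) : ℕ → Set V
  | 0 => {s}
  | i + 1 => burnt G s S i ∪
      {u | u ∉ S.take (i + 1) ∧ ∃ b ∈ burnt G s S i, G.Adj u b}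

/-- The set of all vertices ever burned by the strategy `S`. -/
def BurntSet (G : SimpleGraph V) (s : V) (S : List V) : Set V := ⋃ i, burnt G s S i

/-- A strategy is a sequence of pairwise distinct vertices; it is valid if the vertex defended
at each step is not yet burning at the start of that step. -/
def ValidStrategy (G : SimpleGraph V) (s : V) (S : List V) : Prop :=
  S.Nodup ∧ ∀ (i : ℕ) (h : i < S.length), S.get ⟨i, h⟩ ∉ burnt G s S i

/-- The number of vertices saved (i.e. not burned) by the strategy `S`. -/
noncomputable def sav (G : SimpleGraph V) (s : V) (S : List V) : ℕ := (BurntSet G s S)ᶜ.ncard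

/-- A valid strategy is minimal if every proper subsequence of it which is itself a valid
strategy saves strictly fewer vertices. -/
def MinimalStrategy (G : SimpleGraph V) (s : V) (S : List V) : Prop :=
  ValidStrategy G s S ∧ ∀ S' : List V, S'.Sublist S → S' ≠ S → ValidStrategy G s S' →
    sav G s S' < sav G s S

/-- A strategy is optimal if it is minimal and saves the maximum number of vertices. -/
def OptimalStrategy (G : SimpleGraph V) (s : V) (S : List V) : Prop :=
  MinimalStrategy G s S ∧ ∀ S' : List V, ValidStrategy G s S' → sav G s S' ≤ sav G s S

/-- A walk is an induced path if it is a path and the subgraph induced on its vertices has no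
edges besides the edges of the path. -/
def IsInducedPath (G : SimpleGraph V) {a b : V} (p : G.Walk a b) : Prop :=
  p.IsPath ∧ ∀ x ∈ p.support, ∀ y ∈ p.support, G.Adj x y → p.toSubgraph.Adj x y

/-- `u` is reachable from `s` in the subgraph of `G` induced on the complement of `A`. -/
def ReachAvoiding (G : SimpleGraph V) (A : Set V) (s u : V) : Prop :=
  ∃ p : G.Walk s u, ∀ x ∈ p.support, x ∉ A

/-- A graph is a threshold graph if for every two vertices `x, y`,
`N(x) ⊆ N[y]` or `N(y) ⊆ N[x]`. -/
def IsThresholdGraph {W : Type*} (H : SimpleGraph W) : Prop :=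
  ∀ x y : W, H.neighborSet x ⊆ H.neighborSet y ∪ {y} ∨
    H.neighborSet y ⊆ H.neighborSet x ∪ {x}

namespace FFAux

variable (G : SimpleGraph V) (s : V) (S : List V)

lemma burnt_succ (i : ℕ) : burnt G s S (i+1) = burnt G s S i ∪
    {u | u ∉ S.take (i + 1) ∧ ∃ b ∈ burnt G s S i, G.Adj u b} := rfl

lemma burnt_subset_succ (i : ℕ) : burnt G s S i ⊆ burnt G s S (i+1) := by
  rw [burnt_succ]; exact Set.subset_union_left

lemma burnt_mono {i j : ℕ} (h : i ≤ j) : burnt G s S i ⊆ burnt G s S j := by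
  induction j with
  | zero => obtain rfl : i = 0 := Nat.le_zero.mp h; exact subset_rfl
  | succ n ih =>
    rcases Nat.lt_or_ge i (n+1) with h' | h'
    · exact (ih (Nat.lt_succ_iff.mp h')).trans (burnt_subset_succ G s S n)
    · obtain rfl : i = n + 1 := le_antisymm h h'
      exact subset_rfl

lemma s_mem_burnt (i : ℕ) : s ∈ burnt G s S i :=
  burnt_mono G s S (Nat.zero_le i) rfl

lemma mem_take_mono {a : V} {i j : ℕ} (hij : i ≤ j) (h : a ∈ S.take i) : a ∈ S.take j := by
  have he : S.take i = (S.take j).take i := by rw [List.take_take, Nat.min_eq_left hij]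
  rw [he] at h
  exact List.take_subset _ _ h

lemma mem_burnt_succ_of_adj {v w : V} {j : ℕ} (hvS : v ∉ S) (hadj : G.Adj v w)
    (hw : w ∈ burnt G s S j) : v ∈ burnt G s S (j+1) := by
  rw [burnt_succ]
  exact Or.inr ⟨fun h => hvS (List.take_subset _ _ h), w, hw, hadj⟩

lemma defended_not_burnt (hv : ValidStrategy G s S) {j : ℕ} (hj : j < S.length) (i : ℕ) :
    S.get ⟨j, hj⟩ ∉ burnt G s S i := by
  induction i with
  | zero =>
    intro h
    have h0 : S.get ⟨j, hj⟩ = s := h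
    exact hv.2 j hj (h0 ▸ s_mem_burnt G s S j)
  | succ n ih =>
    intro h
    rw [burnt_succ] at h
    rcases h with h | ⟨hnt, b, hb, hadj⟩
    · exact ih h
    · rcases Nat.lt_or_ge j (n+1) with hj' | hj'
      · apply hnt
        have hlen : j < (S.take (n+1)).length := by
          simp only [List.length_take]
          omega
        have : (S.take (n+1))[j] = S.get ⟨j, hj⟩ := List.getElem_take ..
        rw [← this]
        exact List.getElem_mem _
      · apply hv.2 j hj
        apply burnt_mono G s S hj'
        rw [burnt_succ]
        exact Or.inr ⟨hnt, b, hb, hadj⟩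

lemma burnt_not_strategy (hv : ValidStrategy G s S) {v : V} {i : ℕ}
    (hb : v ∈ burnt G s S i) (hm : v ∈ S) : False := by
  obtain ⟨n, hn⟩ := List.mem_iff_get.mp hm
  exact defended_not_burnt G s S hv n.isLt i (by rwa [hn])

def NewAt (v : V) (i : ℕ) : Prop := v ∈ burnt G s S i ∧ ∀ j < i, v ∉ burnt G s S j

lemma newAt_unique {v : V} {i i' : ℕ} (h : NewAt G s S v i) (h' : NewAt G s S v i') :
    i = i' := by
  rcases lt_trichotomy i i' with hc | hc | hc
  · exact absurd h.1 (h'.2 i hc)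
  · exact hc
  · exact absurd h'.1 (h.2 i' hc)

lemma newAt_zero {v : V} (h : NewAt G s S v 0) : v = s := h.1

lemma exists_pred {v : V} {i : ℕ} (h : NewAt G s S v (i+1)) :
    ∃ z, G.Adj v z ∧ NewAt G s S z i := by
  obtain ⟨hmem, hnew⟩ := h
  have hv_i : v ∉ burnt G s S i := hnew i (Nat.lt_succ_self i)
  rw [burnt_succ] at hmem
  rcases hmem with h' | ⟨hnt, b, hb, hadj⟩
  · exact absurd h' hv_i
  cases i with
  | zero => exact ⟨b, hadj, hb, fun j hj => absurd hj (Nat.not_lt_zero j)⟩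
  | succ n =>
    by_cases hb' : b ∈ burnt G s S n
    · exfalso
      apply hv_i
      rw [burnt_succ]
      exact Or.inr ⟨fun hmem' => hnt (mem_take_mono S (by omega) hmem'), b, hb', hadj⟩
    · exact ⟨b, hadj, hb, fun j hj hbj => hb' (burnt_mono G s S (by omega) hbj)⟩

section Part2

variable {X : Finset V}

lemma threshold_cases (hth : IsThresholdGraph (G.induce ((↑X : Set V)ᶜ)))
    {a b : V} (ha : a ∉ X) (hb : b ∉ X) :
    (∀ w, w ∉ X → G.Adj a w → (G.Adj b w ∨ w = b)) ∨
    (∀ w, w ∉ X → G.Adj b w → (G.Adj a w ∨ w = a)) := by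
  have ha' : a ∈ ((↑X : Set V)ᶜ) := by simpa using ha
  have hb' : b ∈ ((↑X : Set V)ᶜ) := by simpa using hb
  rcases hth ⟨a, ha'⟩ ⟨b, hb'⟩ with h | h
  · left
    intro w hw hadj
    have hw' : w ∈ ((↑X : Set V)ᶜ) := by simpa using hw
    have hmem : (⟨w, hw'⟩ : ↥((↑X : Set V)ᶜ)) ∈
        (G.induce ((↑X : Set V)ᶜ)).neighborSet ⟨a, ha'⟩ := by
      simp only [mem_neighborSet, comap_adj, Function.Embedding.coe_subtype]
      exact hadj
    rcases h hmem with h' | h'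
    · left
      simpa only [mem_neighborSet, comap_adj, Function.Embedding.coe_subtype] using h'
    · right
      exact congrArg Subtype.val (Set.mem_singleton_iff.mp h')
  · right
    intro w hw hadj
    have hw' : w ∈ ((↑X : Set V)ᶜ) := by simpa using hw
    have hmem : (⟨w, hw'⟩ : ↥((↑X : Set V)ᶜ)) ∈
        (G.induce ((↑X : Set V)ᶜ)).neighborSet ⟨b, hb'⟩ := by
      simp only [mem_neighborSet, comap_adj, Function.Embedding.coe_subtype]
      exact hadj
    rcases h hmem with h' | h'
    · left
      simpa only [mem_neighborSet, comap_adj, Function.Embedding.coe_subtype] using h'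
    · right
      exact congrArg Subtype.val (Set.mem_singleton_iff.mp h')

/-- Lemma M : the key threshold-graph argument. -/
lemma lemmaM (hv : ValidStrategy G s S) (hth : IsThresholdGraph (G.induce ((↑X : Set V)ᶜ)))
    {α β : V} {n : ℕ}
    (hαX : α ∉ X) (hβX : β ∉ X) (hadj : G.Adj α β)
    (hβS : β ∉ S) (hβb : β ∉ burnt G s S (n+1)) (hαb : α ∉ burnt G s S (n+1))
    (hαadj : ∀ w ∈ burnt G s S (n+1), ¬ G.Adj α w) :
    ∀ z, z ∉ X → z ∈ burnt G s S n → ∀ h', h' ∉ X → G.Adj z h' → h' ∈ S := by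
  intro z hzX hzb h' hh'X hadj'
  rcases threshold_cases G hth hαX hzX with hc | hc
  · rcases hc β hβX hadj with h1 | h1
    · exact absurd (mem_burnt_succ_of_adj G s S hβS h1.symm hzb) hβb
    · exact absurd (burnt_subset_succ G s S n (h1 ▸ hzb)) hβb
  · by_contra hS'
    have hh'b : h' ∈ burnt G s S (n+1) := mem_burnt_succ_of_adj G s S hS' hadj'.symm hzb
    rcases hc h' hh'X hadj' with h1 | h1
    · exact hαadj h' hh'b h1
    · exact hαb (h1 ▸ hh'b)

/-- `SpreadL j` : there is an H-to-H fire spread from time `j` to time `j+1`. -/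
def SpreadL (j : ℕ) : Prop :=
  ∃ β z : V, β ∉ X ∧ z ∉ X ∧ G.Adj β z ∧ NewAt G s S β (j+1) ∧ NewAt G s S z j

lemma burnt_not_mem (hv : ValidStrategy G s S) {v : V} {i : ℕ} (hb : v ∈ burnt G s S i) :
    v ∉ S := fun hm => burnt_not_strategy G s S hv hb hm

/-- T5 : any two H-to-H spread levels are within 1 of each other. -/
lemma spread_window (hv : ValidStrategy G s S)
    (hth : IsThresholdGraph (G.induce ((↑X : Set V)ᶜ)))
    {j j' : ℕ} (h1 : SpreadL G s S (X := X) j) (h2 : SpreadL G s S (X := X) j')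
    (hle : j ≤ j') : j' ≤ j + 1 := by
  by_contra hcon
  have hj2 : j + 2 ≤ j' := by omega
  obtain ⟨β', z', hβ'X, hz'X, hadj', hβ'n, hz'n⟩ := h2
  obtain ⟨β, z, hβX, hzX, hadj, hβn, hzn⟩ := h1
  have e1 : j' - 2 + 1 = j' - 1 := by omega
  have hkill := lemmaM G s S hv hth (α := β') (β := z') (n := j' - 2) hβ'X hz'X hadj'
    (burnt_not_mem G s S hv hz'n.1)
    (by rw [e1]; exact hz'n.2 (j'-1) (by omega))
    (by rw [e1]; exact hβ'n.2 (j'-1) (by omega))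
    (by
      rw [e1]
      intro w hw hA
      have : β' ∈ burnt G s S (j'-1+1) :=
        mem_burnt_succ_of_adj G s S (burnt_not_mem G s S hv hβ'n.1) hA hw
      have e2 : j' - 1 + 1 = j' := by omega
      rw [e2] at this
      exact hβ'n.2 j' (by omega) this)
  have hzin : z ∈ burnt G s S (j' - 2) := burnt_mono G s S (by omega) hzn.1
  have := hkill z hzX hzin β hβX hadj.symm
  exact burnt_not_strategy G s S hv hβn.1 this

/-- Kill corollary for a defended vertex in H whose first threat is an H-vertex. -/
lemma kill_of_defended (hv : ValidStrategy G s S)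
    (hth : IsThresholdGraph (G.induce ((↑X : Set V)ᶜ)))
    {u β : V} {m : ℕ} (hm2 : 2 ≤ m)
    (hu : ∀ i, u ∉ burnt G s S i)
    (hα2 : ∀ j < m, ∀ b ∈ burnt G s S j, ¬ G.Adj u b)
    (huX : u ∉ X) (hβX : β ∉ X) (hadj : G.Adj u β) (hβn : NewAt G s S β m) :
    ∀ j, j + 1 ≤ m - 1 → ¬ SpreadL G s S (X := X) j := by
  intro j hj hsp
  obtain ⟨βj, zj, hβjX, hzjX, hadjj, hβjn, hzjn⟩ := hsp
  have e1 : m - 2 + 1 = m - 1 := by omega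
  have hkill := lemmaM G s S hv hth (α := u) (β := β) (n := m - 2) huX hβX hadj
    (burnt_not_mem G s S hv hβn.1)
    (by rw [e1]; exact hβn.2 (m-1) (by omega))
    (by rw [e1]; exact hu (m-1))
    (by rw [e1]; exact fun w hw hA => hα2 (m-1) (by omega) w hw hA)
  have hzin : zj ∈ burnt G s S (m - 2) := burnt_mono G s S (by omega) hzjn.1
  have := hkill zj hzjX hzin βj hβjX hadjj.symm
  exact burnt_not_strategy G s S hv hβjn.1 this

end Part2

section Part3

/-- The set of burn times of vertices of `X`. -/
def XTimes (X : Finset V) : Set ℕ := {i | ∃ x ∈ X, NewAt G s S x i}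

noncomputable def cfn (X : Finset V) (p : ℕ) : ℕ := ((XTimes G s S X) ∩ Set.Iic p).ncard

noncomputable def sfn (X : Finset V) (p : ℕ) : ℕ :=
  {j | SpreadL G s S (X := X) j ∧ j + 1 ≤ p}.ncard

variable {X : Finset V}

lemma cfin (p : ℕ) : ((XTimes G s S X) ∩ Set.Iic p).Finite :=
  (Set.finite_Iic p).subset (fun _ h => h.2)

lemma sfin (p : ℕ) : {j | SpreadL G s S (X := X) j ∧ j + 1 ≤ p}.Finite :=
  (Set.finite_Iic p).subset (fun j hj => Set.mem_Iic.mpr (by have := hj.2; omega))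

lemma c_pos {p : ℕ} (hp : p ∈ XTimes G s S X) : 1 ≤ cfn G s S X p :=
  (Set.ncard_pos (cfin G s S p)).mpr ⟨p, hp, Set.mem_Iic.mpr le_rfl⟩

lemma c_succ {q p : ℕ} (hq : q < p) (hp : p ∈ XTimes G s S X) :
    cfn G s S X q + 1 ≤ cfn G s S X p := by
  have h2 : p ∉ (XTimes G s S X) ∩ Set.Iic q := fun h => by
    have := Set.mem_Iic.mp h.2; omega
  have h1 : insert p ((XTimes G s S X) ∩ Set.Iic q) ⊆ (XTimes G s S X) ∩ Set.Iic p := by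
    intro a ha
    rcases Set.mem_insert_iff.mp ha with rfl | ha
    · exact ⟨hp, Set.mem_Iic.mpr le_rfl⟩
    · exact ⟨ha.1, Set.mem_Iic.mpr (le_trans (Set.mem_Iic.mp ha.2) (le_of_lt hq))⟩
  calc cfn G s S X q + 1 = (insert p ((XTimes G s S X) ∩ Set.Iic q)).ncard :=
        (Set.ncard_insert_of_notMem h2 (cfin G s S q)).symm
    _ ≤ cfn G s S X p := Set.ncard_le_ncard h1 (cfin G s S p)

open Classical in
noncomputable def xwit (X : Finset V) (i : ℕ) : V :=
  if h : ∃ x, x ∈ X ∧ NewAt G s S x i then h.choose else s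

lemma xwit_spec {i : ℕ} (hi : i ∈ XTimes G s S X) :
    xwit G s S X i ∈ X ∧ NewAt G s S (xwit G s S X i) i := by
  obtain ⟨x, hx, hn⟩ := hi
  have h : ∃ x, x ∈ X ∧ NewAt G s S x i := ⟨x, hx, hn⟩
  rw [xwit]
  rw [dif_pos h]
  exact h.choose_spec

lemma c_le_card (p : ℕ) : cfn G s S X p ≤ X.card := by
  rw [← Set.ncard_coe_finset]
  exact Set.ncard_le_ncard_of_injOn (xwit G s S X)
    (fun a ha => (xwit_spec G s S ha.1).1)
    (fun a ha b hb he =>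
      newAt_unique G s S (xwit_spec G s S ha.1).2 (he ▸ (xwit_spec G s S hb.1).2))
    X.finite_toSet

lemma c_le_card' {u : V} (huX : u ∈ X) (hu : ∀ i, u ∉ burnt G s S i) (p : ℕ) :
    cfn G s S X p + 1 ≤ X.card := by
  have h1 : cfn G s S X p ≤ ((↑X : Set V) \ {u}).ncard := by
    refine Set.ncard_le_ncard_of_injOn (xwit G s S X) (fun a ha => ?_)
      (fun a ha b hb he =>
        newAt_unique G s S (xwit_spec G s S ha.1).2 (he ▸ (xwit_spec G s S hb.1).2))
      X.finite_toSet.diff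
    refine ⟨(xwit_spec G s S ha.1).1, ?_⟩
    intro hh
    rw [Set.mem_singleton_iff] at hh
    exact hu a (hh ▸ (xwit_spec G s S ha.1).2.1)
  have h2 : ((↑X : Set V) \ {u}).ncard = X.card - 1 := by
    rw [Set.ncard_diff_singleton_of_mem (Finset.mem_coe.mpr huX),
      Set.ncard_coe_finset]
  have h3 : 1 ≤ X.card := Finset.card_pos.mpr ⟨u, huX⟩
  omega

lemma s_mono {q p : ℕ} (h : q ≤ p) : sfn G s S X q ≤ sfn G s S X p :=
  Set.ncard_le_ncard (fun j hj => ⟨hj.1, by have := hj.2; omega⟩) (sfin G s S p)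

lemma s_le_two (hv : ValidStrategy G s S)
    (hth : IsThresholdGraph (G.induce ((↑X : Set V)ᶜ))) (p : ℕ) :
    sfn G s S X p ≤ 2 := by
  classical
  by_cases hne : ∃ j, SpreadL G s S (X := X) j
  · have hsub : {j | SpreadL G s S (X := X) j ∧ j + 1 ≤ p} ⊆
        {Nat.find hne, Nat.find hne + 1} := by
      intro j hj
      have h1 : Nat.find hne ≤ j := Nat.find_min' hne hj.1
      have h2 : j ≤ Nat.find hne + 1 :=
        spread_window G s S hv hth (Nat.find_spec hne) hj.1 h1
      simp only [Set.mem_insert_iff, Set.mem_singleton_iff]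
      omega
    calc sfn G s S X p ≤ ({Nat.find hne, Nat.find hne + 1} : Set ℕ).ncard :=
          Set.ncard_le_ncard hsub (Set.toFinite _)
      _ = 2 := Set.ncard_pair (by omega)
  · have he : {j | SpreadL G s S (X := X) j ∧ j + 1 ≤ p} = ∅ :=
      Set.eq_empty_iff_forall_notMem.mpr (fun j hj => hne ⟨j, hj.1⟩)
    rw [sfn, he, Set.ncard_empty]
    omega

lemma s_zero {p : ℕ} (h : ∀ j, j + 1 ≤ p → ¬ SpreadL G s S (X := X) j) :
    sfn G s S X p = 0 := by
  have he : {j | SpreadL G s S (X := X) j ∧ j + 1 ≤ p} = ∅ :=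
    Set.eq_empty_iff_forall_notMem.mpr (fun j hj => h j hj.2 hj.1)
  rw [sfn, he, Set.ncard_empty]

lemma one_le_sfn {p j : ℕ} (hsp : SpreadL G s S (X := X) j) (hjp : j + 1 ≤ p) :
    1 ≤ sfn G s S X p :=
  (Set.ncard_pos (sfin G s S p)).mpr ⟨j, hsp, hjp⟩

lemma two_le_sfn {p j j' : ℕ} (hsp : SpreadL G s S (X := X) j)
    (hsp' : SpreadL G s S (X := X) j') (hne : j ≠ j')
    (hjp : j + 1 ≤ p) (hj'p : j' + 1 ≤ p) : 2 ≤ sfn G s S X p := by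
  have hsub : ({j, j'} : Set ℕ) ⊆ {i | SpreadL G s S (X := X) i ∧ i + 1 ≤ p} := by
    intro a ha
    rcases Set.mem_insert_iff.mp ha with rfl | ha
    · exact ⟨hsp, hjp⟩
    · rw [Set.mem_singleton_iff] at ha
      subst ha
      exact ⟨hsp', hj'p⟩
  calc 2 = ({j, j'} : Set ℕ).ncard := (Set.ncard_pair hne).symm
    _ ≤ sfn G s S X p := Set.ncard_le_ncard hsub (sfin G s S p)

lemma s_succ1 {q p j : ℕ} (hsp : SpreadL G s S (X := X) j) (hjp : j + 1 ≤ p)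
    (hjq : ¬ (j + 1 ≤ q)) (hqp : q ≤ p) :
    sfn G s S X q + 1 ≤ sfn G s S X p := by
  have h2 : j ∉ {j' | SpreadL G s S (X := X) j' ∧ j' + 1 ≤ q} := fun h => hjq h.2
  have h1 : insert j {j' | SpreadL G s S (X := X) j' ∧ j' + 1 ≤ q} ⊆
      {j' | SpreadL G s S (X := X) j' ∧ j' + 1 ≤ p} := by
    intro a ha
    rcases Set.mem_insert_iff.mp ha with rfl | ha
    · exact ⟨hsp, hjp⟩
    · exact ⟨ha.1, by have := ha.2; omega⟩
  calc sfn G s S X q + 1 = (insert j {j' | SpreadL G s S (X := X) j' ∧ j' + 1 ≤ q}).ncard :=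
        (Set.ncard_insert_of_notMem h2 (sfin G s S q)).symm
    _ ≤ sfn G s S X p := Set.ncard_le_ncard h1 (sfin G s S p)

lemma s_succ2 {q p j j' : ℕ} (hsp : SpreadL G s S (X := X) j)
    (hsp' : SpreadL G s S (X := X) j') (hne : j ≠ j')
    (hjp : j + 1 ≤ p) (hj'p : j' + 1 ≤ p)
    (hjq : ¬ (j + 1 ≤ q)) (hj'q : ¬ (j' + 1 ≤ q)) (hqp : q ≤ p) :
    sfn G s S X q + 2 ≤ sfn G s S X p := by
  have h2 : j' ∉ {i | SpreadL G s S (X := X) i ∧ i + 1 ≤ q} := fun h => hj'q h.2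
  have h3 : j ∉ insert j' {i | SpreadL G s S (X := X) i ∧ i + 1 ≤ q} := by
    intro h
    rcases Set.mem_insert_iff.mp h with h | h
    · exact hne h
    · exact hjq h.2
  have h1 : insert j (insert j' {i | SpreadL G s S (X := X) i ∧ i + 1 ≤ q}) ⊆
      {i | SpreadL G s S (X := X) i ∧ i + 1 ≤ p} := by
    intro a ha
    rcases Set.mem_insert_iff.mp ha with rfl | ha
    · exact ⟨hsp, hjp⟩
    · rcases Set.mem_insert_iff.mp ha with rfl | ha
      · exact ⟨hsp', hj'p⟩
      · exact ⟨ha.1, by have := ha.2; omega⟩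
  calc sfn G s S X q + 2
      = (insert j (insert j' {i | SpreadL G s S (X := X) i ∧ i + 1 ≤ q})).ncard := by
        rw [Set.ncard_insert_of_notMem h3 ((sfin G s S q).insert j'),
          Set.ncard_insert_of_notMem h2 (sfin G s S q), sfn]
    _ ≤ sfn G s S X p := Set.ncard_le_ncard h1 (sfin G s S p)

end Part3

section Part4

variable {X : Finset V}

/-- Lemma P : bound on burn times of `X`-vertices. -/
lemma lemmaP (hv : ValidStrategy G s S)
    (hth : IsThresholdGraph (G.induce ((↑X : Set V)ᶜ))) :
    ∀ p, p ∈ XTimes G s S X →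
      p + 1 ≤ 2 * cfn G s S X p + sfn G s S X p := by
  intro p
  induction p using Nat.strong_induction_on with
  | _ p IH =>
    intro hp
    have hc1 : 1 ≤ cfn G s S X p := c_pos G s S hp
    rcases Nat.eq_zero_or_pos p with rfl | hp1
    · omega
    obtain ⟨x, hxX, hxn⟩ := hp
    have hpmem : p ∈ XTimes G s S X := ⟨x, hxX, hxn⟩
    have hxn' : NewAt G s S x ((p-1)+1) := by
      rwa [Nat.sub_add_cancel hp1]
    obtain ⟨z, hadjz, hzn⟩ := exists_pred G s S hxn'
    by_cases hzX : z ∈ X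
    · have hp' : p - 1 ∈ XTimes G s S X := ⟨z, hzX, hzn⟩
      have h1 := IH (p-1) (by omega) hp'
      have h2 := c_succ G s S (show p - 1 < p by omega) hpmem
      have h3 := s_mono G s S (X := X) (show p - 1 ≤ p by omega)
      omega
    · by_cases hp2 : p = 1
      · omega
      -- p ≥ 2
      have e2 : p - 2 + 1 = p - 1 := by omega
      have hzn' : NewAt G s S z ((p-2)+1) := by rwa [e2]
      obtain ⟨w, hadjw, hwn⟩ := exists_pred G s S hzn'
      by_cases hwX : w ∈ X
      · have hp' : p - 2 ∈ XTimes G s S X := ⟨w, hwX, hwn⟩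
        have h1 := IH (p-2) (by omega) hp'
        have h2 := c_succ G s S (show p - 2 < p by omega) hpmem
        have h3 := s_mono G s S (X := X) (show p - 2 ≤ p by omega)
        omega
      · have hsp1 : SpreadL G s S (X := X) (p-2) := ⟨z, w, hzX, hwX, hadjw, hzn', hwn⟩
        by_cases hp3 : p = 2
        · have h1 := one_le_sfn G s S (p := p) hsp1 (by omega)
          omega
        -- p ≥ 3
        have e3 : p - 3 + 1 = p - 2 := by omega
        have hwn' : NewAt G s S w ((p-3)+1) := by rwa [e3]
        obtain ⟨v, hadjv, hvn⟩ := exists_pred G s S hwn'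
        by_cases hvX : v ∈ X
        · have hp' : p - 3 ∈ XTimes G s S X := ⟨v, hvX, hvn⟩
          have h1 := IH (p-3) (by omega) hp'
          have h2 := c_succ G s S (show p - 3 < p by omega) hpmem
          have h3 := s_succ1 G s S (q := p - 3) (p := p) (j := p - 2) hsp1 (by omega) (by omega)
            (show p - 3 ≤ p by omega)
          omega
        · have hsp2 : SpreadL G s S (X := X) (p-3) := ⟨w, v, hwX, hvX, hadjv, hwn', hvn⟩
          by_cases hp4 : p = 3
          · have h1 := two_le_sfn G s S (p := p) hsp2 hsp1 (by omega) (by omega) (by omega)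
            omega
          -- p ≥ 4
          have e4 : p - 4 + 1 = p - 3 := by omega
          have hvn' : NewAt G s S v ((p-4)+1) := by rwa [e4]
          obtain ⟨t', hadjt, htn⟩ := exists_pred G s S hvn'
          by_cases htX : t' ∈ X
          · have hp' : p - 4 ∈ XTimes G s S X := ⟨t', htX, htn⟩
            have h1 := IH (p-4) (by omega) hp'
            have h2 := c_succ G s S (show p - 4 < p by omega) hpmem
            have h3 := s_succ2 G s S (q := p - 4) (p := p) (j := p - 3) (j' := p - 2) hsp2 hsp1 (by omega)
              (by omega) (by omega) (by omega) (by omega) (show p - 4 ≤ p by omega)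
            omega
          · have hsp3 : SpreadL G s S (X := X) (p-4) := ⟨v, t', hvX, htX, hadjt, hvn', htn⟩
            have hw := spread_window G s S hv hth hsp3 hsp1 (by omega)
            omega

end Part4

section Part5

lemma threat_exists (hmin : MinimalStrategy G s S) (hne : S ≠ []) :
    ∃ i, ∃ b, b ∈ burnt G s S i ∧ G.Adj (S.getLast hne) b := by
  have hv : ValidStrategy G s S := hmin.1
  by_contra hcon
  push_neg at hcon
  set u := S.getLast hne with hu
  set t := S.length with htlen
  have ht1 : 1 ≤ t := List.length_pos_iff.mpr hne
  have hdl : S.dropLast = S.take (t-1) := List.dropLast_eq_take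
  have hEq : ∀ i, burnt G s S.dropLast i = burnt G s S i := by
    intro i
    induction i with
    | zero => rfl
    | succ n ih =>
      rw [burnt_succ, burnt_succ, ih]
      congr 1
      ext wv
      simp only [Set.mem_setOf_eq]
      constructor
      · rintro ⟨hnt, b, hb, hadj⟩
        refine ⟨?_, b, hb, hadj⟩
        intro hmem
        by_cases hc : n + 1 ≤ t - 1
        · apply hnt
          rw [hdl, List.take_take, Nat.min_eq_left hc]
          exact hmem
        · have hSmem : wv ∈ S := List.take_subset _ _ hmem
          rw [← List.dropLast_append_getLast hne] at hSmem
          rcases List.mem_append.mp hSmem with h' | h'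
          · apply hnt
            have hdll : S.dropLast.take (n+1) = S.dropLast :=
              List.take_of_length_le (by rw [List.length_dropLast]; omega)
            rw [hdll]
            exact h'
          · have hwu : wv = u := by simpa using h'
            exact hcon n b hb (hwu ▸ hadj)
      · rintro ⟨hnt, b, hb, hadj⟩
        refine ⟨?_, b, hb, hadj⟩
        intro hmem
        apply hnt
        rw [hdl, List.take_take] at hmem
        exact mem_take_mono S (Nat.min_le_left _ _) hmem
  have hvalid' : ValidStrategy G s S.dropLast := by
    refine ⟨(List.dropLast_sublist S).nodup hv.1, ?_⟩
    intro i hi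
    have hi' : i < t := by
      rw [List.length_dropLast] at hi; omega
    have hget : S.dropLast.get ⟨i, hi⟩ = S.get ⟨i, hi'⟩ := by
      simp [List.get_eq_getElem, List.getElem_dropLast]
    rw [hget, hEq]
    exact hv.2 i hi'
  have hdiff : S.dropLast ≠ S := by
    intro h
    have hlen := congrArg List.length h
    rw [List.length_dropLast] at hlen
    omega
  have hlt := hmin.2 S.dropLast (List.dropLast_sublist S) hdiff hvalid'
  have hBu : BurntSet G s S.dropLast = BurntSet G s S := Set.iUnion_congr hEq
  have hsav : sav G s S.dropLast = sav G s S := by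
    unfold sav
    rw [hBu]
  omega

end Part5

end FFAux

/-- If `X ⊆ V(G)` has size `k` and `G ∖ X` is a threshold graph, then every
optimal strategy for the firefighting process on `(G, s)` defends at most `2k + 2` vertices. -/
theorem optimal_strategy_le_of_threshold_modulator {V : Type*} [Fintype V] (G : SimpleGraph V)
    (s : V) (X : Finset V) (k : ℕ) (hX : X.card = k)
    (hth : IsThresholdGraph (G.induce ((↑X : Set V)ᶜ)))
    (S : List V) (hS : OptimalStrategy G s S) :
    S.length ≤ 2 * k + 2 := by
  classical
  open FFAux in
  obtain ⟨hminS, -⟩ := hS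
  have hv : ValidStrategy G s S := hminS.1
  by_cases ht2 : S.length ≤ 2
  · omega
  push_neg at ht2
  have hne : S ≠ [] := by
    intro h
    rw [h] at ht2
    simp at ht2
  set t := S.length with htdef
  have ht1 : t - 1 < t := by omega
  have hlast : S.getLast hne = S.get ⟨t - 1, ht1⟩ := List.getLast_eq_getElem hne
  obtain ⟨u, hudef⟩ : ∃ u', S.getLast hne = u' := ⟨_, rfl⟩
  rw [hudef] at hlast
  have hu_nb : ∀ i, u ∉ burnt G s S i := by
    intro i
    rw [hlast]
    exact FFAux.defended_not_burnt G s S hv ht1 i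
  have hex : ∃ i, ∃ b, b ∈ burnt G s S i ∧ G.Adj u b := by
    have h := FFAux.threat_exists G s S hminS hne
    rwa [hudef] at h
  set m := Nat.find hex with hmdef
  obtain ⟨β, hβb, hβadj⟩ := Nat.find_spec hex
  have hα2 : ∀ j < m, ∀ b ∈ burnt G s S j, ¬ G.Adj u b := by
    intro j hj b hb hA
    exact Nat.find_min hex hj ⟨b, hb, hA⟩
  have htm : t ≤ m + 1 := by
    by_contra hcon
    push_neg at hcon
    have hu_take : u ∉ S.take (m+1) := by
      intro hmem
      obtain ⟨j, hjlt, hj⟩ := List.mem_iff_getElem.mp hmem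
      have hjlt2 : j < t ∧ j < m + 1 := by
        constructor <;> (have := hjlt; simp only [List.length_take] at this; omega)
      have hSj : S[j] = u := by
        have h' : (S.take (m+1))[j] = S[j]'(hjlt2.1) := List.getElem_take ..
        exact h'.symm.trans hj
      have hgu : S.get ⟨j, hjlt2.1⟩ = S.get ⟨t-1, ht1⟩ := by
        rw [← hlast]
        simpa [List.get_eq_getElem] using hSj
      have hfin := List.nodup_iff_injective_get.mp hv.1 hgu
      have hje : j = t - 1 := congrArg Fin.val hfin
      omega
    have : u ∈ burnt G s S (m+1) := by
      rw [FFAux.burnt_succ]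
      exact Or.inr ⟨hu_take, β, hβb, hβadj⟩
    exact hu_nb _ this
  have hm2 : 2 ≤ m := by omega
  have hβnew : FFAux.NewAt G s S β m :=
    ⟨hβb, fun j hj hbj => Nat.find_min hex hj ⟨β, hbj, hβadj⟩⟩
  have hcle : ∀ q, FFAux.cfn G s S X q ≤ k := fun q => hX ▸ FFAux.c_le_card G s S q
  have hsle : ∀ q, FFAux.sfn G s S X q ≤ 2 := fun q => FFAux.s_le_two G s S hv hth q
  have em1 : m - 1 + 1 = m := by omega
  have em2 : m - 2 + 1 = m - 1 := by omega
  -- the predecessor of β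
  by_cases hβX : β ∈ X
  · -- β ∈ X : m is an X-burn-time
    have hp : m ∈ FFAux.XTimes G s S X := ⟨β, hβX, hβnew⟩
    have hP := FFAux.lemmaP G s S hv hth m hp
    by_cases huX : u ∈ X
    · have hcle' : ∀ q, FFAux.cfn G s S X q + 1 ≤ k :=
        fun q => hX ▸ FFAux.c_le_card' G s S huX hu_nb q
      have := hcle' m
      have := hsle m
      omega
    · have := hcle m
      have := hsle m
      omega
  · -- β ∉ X
    have hβm' : FFAux.NewAt G s S β ((m-1)+1) := by rwa [em1]
    obtain ⟨z, hadjz, hzn⟩ := FFAux.exists_pred G s S hβm'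
    by_cases huX : u ∈ X
    · -- u ∈ X
      have hcle' : ∀ q, FFAux.cfn G s S X q + 1 ≤ k :=
        fun q => hX ▸ FFAux.c_le_card' G s S huX hu_nb q
      by_cases hzX : z ∈ X
      · have hp : m - 1 ∈ FFAux.XTimes G s S X := ⟨z, hzX, hzn⟩
        have hP := FFAux.lemmaP G s S hv hth (m-1) hp
        have := hcle' (m-1)
        have := hsle (m-1)
        omega
      · -- z ∉ X : spread at level m (param m-1)
        have hsp1 : FFAux.SpreadL G s S (X := X) (m-1) :=
          ⟨β, z, hβX, hzX, hadjz, hβm', hzn⟩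
        have hzn' : FFAux.NewAt G s S z ((m-2)+1) := by rwa [em2]
        obtain ⟨w, hadjw, hwn⟩ := FFAux.exists_pred G s S hzn'
        by_cases hwX : w ∈ X
        · have hp : m - 2 ∈ FFAux.XTimes G s S X := ⟨w, hwX, hwn⟩
          have hσ0 : FFAux.sfn G s S X (m-2) = 0 := by
            apply FFAux.s_zero
            intro j hj hs
            have := FFAux.spread_window G s S hv hth hs hsp1 (by omega)
            omega
          have hP := FFAux.lemmaP G s S hv hth (m-2) hp
          have := hcle' (m-2)
          omega
        · by_cases hm3 : m = 2
          · have hk1 : 1 ≤ k := hX ▸ Finset.card_pos.mpr ⟨u, huX⟩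
            omega
          · -- m ≥ 3
            have em3 : m - 3 + 1 = m - 2 := by omega
            have hsp2 : FFAux.SpreadL G s S (X := X) (m-2) :=
              ⟨z, w, hzX, hwX, hadjw, hzn', hwn⟩
            have hwn' : FFAux.NewAt G s S w ((m-3)+1) := by rwa [em3]
            obtain ⟨v, hadjv, hvn⟩ := FFAux.exists_pred G s S hwn'
            by_cases hvX : v ∈ X
            · have hp : m - 3 ∈ FFAux.XTimes G s S X := ⟨v, hvX, hvn⟩
              have hσ0 : FFAux.sfn G s S X (m-3) = 0 := by
                apply FFAux.s_zero
                intro j hj hs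
                have := FFAux.spread_window G s S hv hth hs hsp1 (by omega)
                omega
              have hP := FFAux.lemmaP G s S hv hth (m-3) hp
              have := hcle' (m-3)
              omega
            · have hsp3 : FFAux.SpreadL G s S (X := X) (m-3) :=
                ⟨w, v, hwX, hvX, hadjv, hwn', hvn⟩
              have := FFAux.spread_window G s S hv hth hsp3 hsp1 (by omega)
              omega
    · -- u ∉ X : the kill lemma is available
      have hkill := FFAux.kill_of_defended G s S hv hth hm2 hu_nb hα2 huX hβX hβadj hβnew
      by_cases hzX : z ∈ X
      · have hp : m - 1 ∈ FFAux.XTimes G s S X := ⟨z, hzX, hzn⟩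
        have hσ0 : FFAux.sfn G s S X (m-1) = 0 := by
          apply FFAux.s_zero
          intro j hj hs
          exact hkill j (by omega) hs
        have hP := FFAux.lemmaP G s S hv hth (m-1) hp
        have := hcle (m-1)
        omega
      · have hzn' : FFAux.NewAt G s S z ((m-2)+1) := by rwa [em2]
        obtain ⟨w, hadjw, hwn⟩ := FFAux.exists_pred G s S hzn'
        by_cases hwX : w ∈ X
        · have hp : m - 2 ∈ FFAux.XTimes G s S X := ⟨w, hwX, hwn⟩
          have hσ0 : FFAux.sfn G s S X (m-2) = 0 := by
            apply FFAux.s_zero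
            intro j hj hs
            exact hkill j (by omega) hs
          have hP := FFAux.lemmaP G s S hv hth (m-2) hp
          have := hcle (m-2)
          omega
        · exfalso
          have hsp : FFAux.SpreadL G s S (X := X) (m-2) :=
            ⟨z, w, hzX, hwX, hadjw, hzn', hwn⟩
          exact hkill (m-2) (by omega) hsp
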